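/- Conservation of traces along the degenerate Schlesinger flow: let A_1, …, A_{N+2} : U → M_2(ℂ) be holomorphic maps solving the degenerate Schlesinger system S(1,…,1,2;N) on the connected open set U. Then for each j = 2, …, N+2 the function t ↦ tr A_j(t) is constant on U, and there exists a constant c ∈ ℂ such that tr A_1(t) = c · t_1 for all t ∈ U. -/

import Mathlib

open Finset

/-- Entrywise partial derivative of a matrix-valued map in the `k`-th coordinate
direction. -/
noncomputable def pder {N : ℕ} (k : Fin N)
    (f : (Fin N → ℂ) → Matrix (Fin 2) (Fin 2) ℂ) (t : Fin N → ℂ) :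
    Matrix (Fin 2) (Fin 2) ℂ :=
  Matrix.of fun a b => fderiv ℂ (fun s => f s a b) t (Pi.single k 1)

/-- Matrix commutator `[X, Y] = XY − YX`. -/
noncomputable def mComm (X Y : Matrix (Fin 2) (Fin 2) ℂ) : Matrix (Fin 2) (Fin 2) ℂ :=
  X * Y - Y * X

/-- The value `t_j` for the classical index `j ∈ {1, …, N+2}`: the coordinate
`t ⟨j−1⟩` for `1 ≤ j ≤ N`, and the frozen values `t_{N+1} = 1`, `t_{N+2} = 0`. -/
def tval {N : ℕ} (t : Fin N → ℂ) (j : ℕ) : ℂ :=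
  if h : 1 ≤ j ∧ j ≤ N then t ⟨j - 1, by omega⟩ else if j = N + 1 then 1 else 0

/-- The set of points `t ∈ ℂ^N` with `t_i ≠ 0`, `t_i ≠ 1` and `t_i ≠ t_j` for `i ≠ j`. -/
def goodDomain (N : ℕ) : Set (Fin N → ℂ) :=
  {t | (∀ i, t i ≠ 0 ∧ t i ≠ 1) ∧ ∀ i j, i ≠ j → t i ≠ t j}

/-- `A 1, …, A (N+2) : U → M₂(ℂ)` solve the degenerate Schlesinger system
`S(1,…,1,2;N)`: each entry is holomorphic on `U`, and the partial differential
equations obtained by equating coefficients of `dt_1, …, dt_N` in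
`dA_1 = Σ_{i=2}^{N+1} [A_i, A_1] d log t_i + (A_1 + [A_{N+2}, A_1]) d log t_1`,
`dA_j = Σ_{i=2,i≠j}^{N+2} [A_i, A_j] d log(t_j − t_i) + ([A_1,A_j]/t_j) d log(t_j/t_1)`
for `j = 2, …, N+1`, and
`dA_{N+2} = Σ_{i=2}^{N+1} (([A_i,A_1]/t_i) d log(t_i/t_1) + [A_i,A_{N+2}] d log t_i)`
hold on `U` (with `t_{N+1} = 1`, `t_{N+2} = 0` held constant).  The coordinate
`k : Fin N` represents the variable `t_{k+1}`. -/
def SolvesDegSch {N : ℕ} (U : Set (Fin N → ℂ))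
    (A : ℕ → (Fin N → ℂ) → Matrix (Fin 2) (Fin 2) ℂ) : Prop :=
  (∀ j ∈ Icc 1 (N + 2), ∀ a b : Fin 2, DifferentiableOn ℂ (fun t => A j t a b) U) ∧
  ∀ t ∈ U, ∀ k : Fin N,
    (pder k (A 1) t =
      if (k : ℕ) = 0 then (t k)⁻¹ • (A 1 t + mComm (A (N + 2) t) (A 1 t))
      else (t k)⁻¹ • mComm (A ((k : ℕ) + 1) t) (A 1 t)) ∧
    (∀ j ∈ Icc 2 (N + 1),
      pder k (A j) t =
        if (k : ℕ) + 1 = j then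
          (∑ i ∈ (Icc 2 (N + 2)).erase j,
            (tval t j - tval t i)⁻¹ • mComm (A i t) (A j t)) +
            ((tval t j) ^ 2)⁻¹ • mComm (A 1 t) (A j t)
        else if (k : ℕ) = 0 then
          (-(tval t j * t k)⁻¹) • mComm (A 1 t) (A j t)
        else (-(tval t j - t k)⁻¹) • mComm (A ((k : ℕ) + 1) t) (A j t)) ∧
    (pder k (A (N + 2)) t =
      if (k : ℕ) = 0 then
        ∑ i ∈ Icc 2 (N + 1), (-(tval t i * t k)⁻¹) • mComm (A i t) (A 1 t)
      else ((t k) ^ 2)⁻¹ • mComm (A ((k : ℕ) + 1) t) (A 1 t) +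
        (t k)⁻¹ • mComm (A ((k : ℕ) + 1) t) (A (N + 2) t))


lemma trace_mComm (X Y : Matrix (Fin 2) (Fin 2) ℂ) : (mComm X Y).trace = 0 := by
  simp [mComm, Matrix.trace_sub, Matrix.trace_mul_comm X Y]

lemma clm_zero_of_single {N : ℕ} (L : (Fin N → ℂ) →L[ℂ] ℂ)
    (h : ∀ k, L (Pi.single k 1) = 0) : L = 0 := by
  ext v
  have hv : v = ∑ k : Fin N, v k • (Pi.single k 1 : Fin N → ℂ) := by
    funext j
    simp [Finset.sum_apply, Pi.single_apply]
  calc L v = L (∑ k : Fin N, v k • (Pi.single k 1 : Fin N → ℂ)) := by rw [← hv]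
    _ = ∑ k : Fin N, v k • L (Pi.single k 1) := by rw [map_sum]; simp
    _ = 0 := by simp [h]

lemma fderiv_trace_apply {N : ℕ} (f : (Fin N → ℂ) → Matrix (Fin 2) (Fin 2) ℂ)
    (t : Fin N → ℂ) (hf : ∀ a b : Fin 2, DifferentiableAt ℂ (fun s => f s a b) t) (k : Fin N) :
    fderiv ℂ (fun s => (f s).trace) t (Pi.single k 1) = (pder k f t).trace := by
  have h1 : (fun s => (f s).trace) = fun s => ∑ a : Fin 2, f s a a := by
    funext s; simp [Matrix.trace, Matrix.diag]
  rw [h1, fderiv_fun_sum (fun a _ => hf a a)]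
  simp [pder, Matrix.trace, Matrix.diag]

lemma const_on_of_fderiv_zero {N : ℕ} {U : Set (Fin N → ℂ)} (hU : IsOpen U)
    (hconn : IsPreconnected U) {f : (Fin N → ℂ) → ℂ}
    (hf : DifferentiableOn ℂ f U) (hd : ∀ t ∈ U, fderiv ℂ f t = 0)
    {x y : Fin N → ℂ} (hx : x ∈ U) (hy : y ∈ U) : f y = f x := by
  have hloc : ∀ z ∈ U, ∃ ε > 0, Metric.ball z ε ⊆ U ∧ ∀ w ∈ Metric.ball z ε, f w = f z := by
    intro z hz
    obtain ⟨ε, hε, hball⟩ := Metric.isOpen_iff.1 hU z hz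
    refine ⟨ε, hε, hball, fun w hw => ?_⟩
    refine (convex_ball z ε).is_const_of_fderivWithin_eq_zero (hf.mono hball) ?_ hw
      (Metric.mem_ball_self hε)
    intro p hp
    rw [fderivWithin_of_isOpen Metric.isOpen_ball hp]
    exact hd p (hball hp)
  have hopen : ∀ P : ℂ → Prop, IsOpen {z : Fin N → ℂ |
      ∃ ε > 0, Metric.ball z ε ⊆ U ∧ ∀ w ∈ Metric.ball z ε, P (f w)} := by
    intro P
    rw [Metric.isOpen_iff]
    rintro z ⟨ε, hε, hsub, hP⟩
    refine ⟨ε, hε, fun w hw => ?_⟩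
    have hw' : dist w z < ε := Metric.mem_ball.1 hw
    have hsub2 : Metric.ball w (ε - dist w z) ⊆ Metric.ball z ε :=
      Metric.ball_subset_ball' (by linarith)
    exact ⟨ε - dist w z, by linarith, hsub2.trans hsub, fun p hp => hP p (hsub2 hp)⟩
  have hUsub : U ⊆ {z : Fin N → ℂ |
        ∃ ε > 0, Metric.ball z ε ⊆ U ∧ ∀ w ∈ Metric.ball z ε, f w = f x} ∪
      {z : Fin N → ℂ |
        ∃ ε > 0, Metric.ball z ε ⊆ U ∧ ∀ w ∈ Metric.ball z ε, f w ≠ f x} := by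
    intro z hz
    obtain ⟨ε, hε, hsub, hc⟩ := hloc z hz
    by_cases hfz : f z = f x
    · exact Or.inl ⟨ε, hε, hsub, fun w hw => (hc w hw).trans hfz⟩
    · exact Or.inr ⟨ε, hε, hsub, fun w hw h => hfz ((hc w hw).symm.trans h)⟩
  have hdisj : Disjoint {z : Fin N → ℂ |
        ∃ ε > 0, Metric.ball z ε ⊆ U ∧ ∀ w ∈ Metric.ball z ε, f w = f x}
      {z : Fin N → ℂ |
        ∃ ε > 0, Metric.ball z ε ⊆ U ∧ ∀ w ∈ Metric.ball z ε, f w ≠ f x} := by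
    rw [Set.disjoint_left]
    rintro z ⟨ε, hε, _, h1⟩ ⟨ε', hε', _, h2⟩
    exact h2 z (Metric.mem_ball_self hε') (h1 z (Metric.mem_ball_self hε))
  have hxu : (U ∩ {z : Fin N → ℂ |
      ∃ ε > 0, Metric.ball z ε ⊆ U ∧ ∀ w ∈ Metric.ball z ε, f w = f x}).Nonempty := by
    obtain ⟨ε, hε, hsub, hc⟩ := hloc x hx
    exact ⟨x, hx, ε, hε, hsub, hc⟩
  have := hconn.subset_left_of_subset_union (hopen (· = f x)) (hopen (· ≠ f x))
    hdisj hUsub hxu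
  obtain ⟨ε, hε, _, hc⟩ := this hy
  exact hc y (Metric.mem_ball_self hε)

/-- **Conservation of traces along the degenerate Schlesinger flow**: if
`A_1, …, A_{N+2}` solve `S(1,…,1,2;N)` on a connected open `U` contained in the good
domain, then `tr A_j` is constant on `U` for each `j = 2, …, N+2`, and there is a
constant `c ∈ ℂ` with `tr A_1(t) = c · t_1` on `U`. -/
theorem degSch_traces_conserved (N : ℕ) (hN : 0 < N) (U : Set (Fin N → ℂ))
    (hUopen : IsOpen U) (hUconn : IsConnected U) (hUsub : U ⊆ goodDomain N)
    (A : ℕ → (Fin N → ℂ) → Matrix (Fin 2) (Fin 2) ℂ)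
    (hsol : SolvesDegSch U A) :
    (∀ j ∈ Icc 2 (N + 2), ∃ c : ℂ, ∀ t ∈ U, (A j t).trace = c) ∧
    (∃ c : ℂ, ∀ t ∈ U, (A 1 t).trace = c * t ⟨0, hN⟩) := by
  obtain ⟨hdiff, hpde⟩ := hsol
  obtain ⟨x0, hx0⟩ := hUconn.nonempty
  have hdiffAt : ∀ j ∈ Icc 1 (N + 2), ∀ t ∈ U, ∀ a b : Fin 2,
      DifferentiableAt ℂ (fun s => A j s a b) t := fun j hj t ht a b =>
    (hdiff j hj a b).differentiableAt (hUopen.mem_nhds ht)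
  have htrdiff : ∀ j ∈ Icc 1 (N + 2), DifferentiableOn ℂ (fun t => (A j t).trace) U := by
    intro j hj
    have h1 : (fun t => (A j t).trace) = fun t => ∑ a : Fin 2, A j t a a := by
      funext s; simp [Matrix.trace, Matrix.diag]
    rw [h1]
    exact DifferentiableOn.fun_sum (fun a _ => hdiff j hj a a)
  constructor
  · intro j hj
    simp only [mem_Icc] at hj
    have hj1 : j ∈ Icc 1 (N + 2) := by simp only [mem_Icc]; omega
    refine ⟨(A j x0).trace, fun t ht => ?_⟩
    refine const_on_of_fderiv_zero hUopen hUconn.isPreconnected (htrdiff j hj1) ?_ hx0 ht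
    intro t ht
    apply clm_zero_of_single
    intro k
    rw [fderiv_trace_apply (A j) t (fun a b => hdiffAt j hj1 t ht a b) k]
    by_cases hje : j = N + 2
    · subst hje
      rw [(hpde t ht k).2.2]
      split_ifs <;>
        simp [Matrix.trace_sum, Matrix.trace_smul, trace_mComm, Matrix.trace_add]
    · have hj2 : j ∈ Icc 2 (N + 1) := by simp only [mem_Icc]; omega
      rw [(hpde t ht k).2.1 j hj2]
      split_ifs <;>
        simp [Matrix.trace_sum, Matrix.trace_smul, trace_mComm, Matrix.trace_add]
  · set i0 : Fin N := ⟨0, hN⟩ with hi0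
    have hne : ∀ t ∈ U, t i0 ≠ 0 := fun t ht => ((hUsub ht).1 i0).1
    have h1mem : (1 : ℕ) ∈ Icc 1 (N + 2) := by simp only [mem_Icc]; omega
    have hgdiff : DifferentiableOn ℂ (fun t => (A 1 t).trace) U := htrdiff 1 h1mem
    have hhdiff : DifferentiableOn ℂ (fun t => (t i0)⁻¹ * (A 1 t).trace) U := by
      refine DifferentiableOn.mul (DifferentiableOn.inv ?_ hne) hgdiff
      exact (ContinuousLinearMap.proj (R := ℂ) (φ := fun _ : Fin N => ℂ)
        i0).differentiable.differentiableOn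
    have hzero : ∀ t ∈ U, fderiv ℂ (fun t => (t i0)⁻¹ * (A 1 t).trace) t = 0 := by
      intro t ht
      have ht0 : t i0 ≠ 0 := hne t ht
      have hgAt : DifferentiableAt ℂ (fun t => (A 1 t).trace) t :=
        (hgdiff t ht).differentiableAt (hUopen.mem_nhds ht)
      have hgF : HasFDerivAt (fun t => (A 1 t).trace) (fderiv ℂ (fun t => (A 1 t).trace) t) t :=
        hgAt.hasFDerivAt
      have hproj : HasFDerivAt (fun t : Fin N → ℂ => t i0)
          (ContinuousLinearMap.proj (R := ℂ) (φ := fun _ : Fin N => ℂ) i0) t :=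
        (ContinuousLinearMap.proj (R := ℂ) (φ := fun _ : Fin N => ℂ) i0).hasFDerivAt
      have hinv : HasFDerivAt (fun t : Fin N → ℂ => (t i0)⁻¹)
          (-((t i0 ^ 2)⁻¹ • ContinuousLinearMap.proj (R := ℂ) (φ := fun _ : Fin N => ℂ) i0))
          t := by
        have := (hasDerivAt_inv ht0).comp_hasFDerivAt t hproj
        refine this.congr_fderiv ?_; ext v; simp
      have hmul := hinv.fun_mul hgF
      rw [hmul.fderiv]
      apply clm_zero_of_single
      intro k
      have hLk : fderiv ℂ (fun t => (A 1 t).trace) t (Pi.single k 1) = (pder k (A 1) t).trace :=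
        fderiv_trace_apply (A 1) t (fun a b => hdiffAt 1 h1mem t ht a b) k
      have hpd := (hpde t ht k).1
      simp only [ContinuousLinearMap.add_apply, ContinuousLinearMap.smul_apply,
        ContinuousLinearMap.proj_apply, smul_eq_mul, hLk]
      by_cases hk : (k : ℕ) = 0
      · have hk' : k = i0 := Fin.ext hk
        rw [hpd, if_pos hk, hk']
        simp only [ContinuousLinearMap.neg_apply, ContinuousLinearMap.smul_apply,
          ContinuousLinearMap.proj_apply, Pi.single_eq_same, Matrix.trace_smul,
          Matrix.trace_add, trace_mComm, add_zero, smul_eq_mul, mul_one]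
        field_simp
        ring
      · have hk' : i0 ≠ k := fun h => hk (by rw [← h])
        have hs : (Pi.single k 1 : Fin N → ℂ) i0 = 0 := Pi.single_eq_of_ne hk' 1
        rw [hpd, if_neg hk]
        simp [ContinuousLinearMap.neg_apply, ContinuousLinearMap.smul_apply,
          ContinuousLinearMap.proj_apply, hs, Matrix.trace_smul, trace_mComm]
    refine ⟨(x0 i0)⁻¹ * (A 1 x0).trace, fun t ht => ?_⟩
    have hconst : (t i0)⁻¹ * (A 1 t).trace = (x0 i0)⁻¹ * (A 1 x0).trace :=
      const_on_of_fderiv_zero hUopen hUconn.isPreconnected hhdiff hzero hx0 ht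
    have ht0 : t i0 ≠ 0 := hne t ht
    have : t ⟨0, hN⟩ = t i0 := rfl
    rw [this, ← hconst]
    field_simp
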